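/- Let ≺ be a partial order on the set A_G of directed paths in G ending at 0 with distinct non-root intermediate vertices, satisfying: (i) any two paths whose intersection is itself such a path are comparable; (ii) every proper initial segment (as a path from the root outward) of a path is ≺-smaller than the path. For a tree T rooted at 0, define i <_T j iff A_T(i) ≺ A_T(j), where A_T(v) is the unique path in T from v to 0. Then for every T: <_T is a total order on vertices of T; if (j,i) is an edge of T then i <_T j; and for any rooted subtree t of T, the order on t agrees with the restriction of the order on T. -/

import Mathlib

open Finset

open scoped Classical

/-- A subtree of the digraph (with multiplicity function `E`) on vertices
`{0,...,n}`, rooted at `0`: every non-root vertex of the subtree has a unique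
outgoing edge (its parent together with the index of a parallel edge), and
iterating parents reaches the root. -/
structure Subtree (n : ℕ) (E : Fin (n+1) → Fin (n+1) → ℕ) where
  par : Fin (n+1) → Option (Fin (n+1) × ℕ)
  root_par : par 0 = none
  edge_valid : ∀ v p k, par v = some (p, k) → k < E v p
  parent_mem : ∀ v p k, par v = some (p, k) → p = 0 ∨ (par p).isSome
  reaches : ∀ v, (par v).isSome →
    Relation.ReflTransGen (fun a c => ∃ k, par a = some (c, k)) v 0

noncomputable def Subtree.verts {n : ℕ} {E : Fin (n+1) → Fin (n+1) → ℕ}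
    (t : Subtree n E) : Finset (Fin (n+1)) :=
  Finset.univ.filter (fun v => v = 0 ∨ (t.par v).isSome)

def Subtree.IsSubtreeOf {n : ℕ} {E : Fin (n+1) → Fin (n+1) → ℕ}
    (t T : Subtree n E) : Prop :=
  ∀ v, (t.par v).isSome → t.par v = T.par v

def Subtree.IsSpanning {n : ℕ} {E : Fin (n+1) → Fin (n+1) → ℕ}
    (T : Subtree n E) : Prop :=
  ∀ v, v ∈ T.verts

/-- `b` is a `G`-parking function: for every non-empty set `U` of non-root
vertices there is `j ∈ U` with more than `b j` edges from `j` to the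
complement of `U`. (The value `b 0` at the root is irrelevant.) -/
def IsParking {n : ℕ} (E : Fin (n+1) → Fin (n+1) → ℕ) (b : Fin (n+1) → ℕ) : Prop :=
  ∀ U : Finset (Fin (n+1)), U.Nonempty → 0 ∉ U → ∃ j ∈ U, b j < ∑ i ∈ Uᶜ, E j i

/-- `L = [σ₁, ..., σₗ]` is a directed path `⟨σ₁,...,σₗ⟩` of `G` ending at the
root: the vertices `σ₁,...,σₗ` are distinct and non-root, and `G` has edges
`(σ₁,0), (σ₂,σ₁), ..., (σₗ,σₗ₋₁)`. -/
def IsRootPath {n : ℕ} (E : Fin (n+1) → Fin (n+1) → ℕ)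
    (L : List (Fin (n+1))) : Prop :=
  ((0 : Fin (n+1)) :: L).Nodup ∧
    List.Chain' (fun a c => 0 < E c a) ((0 : Fin (n+1)) :: L)

/-- Key structural lemma: for every vertex of the subtree, its tree path is a
root path, ends in the vertex, and every vertex on it is a tree vertex whose
tree path is a prefix. -/
lemma subtree_path_key {n : ℕ} {E : Fin (n+1) → Fin (n+1) → ℕ} (T : Subtree n E)
    (A : Fin (n+1) → List (Fin (n+1)))
    (hA0 : A 0 = []) (hA : ∀ v q k, T.par v = some (q, k) → A v = A q ++ [v]) :
    ∀ v : Fin (n+1), v = 0 ∨ (T.par v).isSome →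
      IsRootPath E (A v) ∧
      ((v = 0 ∧ A v = []) ∨ ∃ M, A v = M ++ [v]) ∧
      (∀ u ∈ A v, (T.par u).isSome ∧ A u <+: A v) := by
  have main : ∀ v : Fin (n+1),
      Relation.ReflTransGen (fun a c => ∃ k, T.par a = some (c, k)) v 0 →
      IsRootPath E (A v) ∧
      ((v = 0 ∧ A v = []) ∨ ∃ M, A v = M ++ [v]) ∧
      (∀ u ∈ A v, (T.par u).isSome ∧ A u <+: A v) := by
    intro v hv
    induction hv using Relation.ReflTransGen.head_induction_on with
    | refl =>
      refine ⟨⟨by simp [hA0], by simp [hA0]; exact List.isChain_singleton _⟩, Or.inl ⟨rfl, hA0⟩, by simp [hA0]⟩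
    | @head a c hac hcb ih =>
      obtain ⟨k, hpar⟩ := hac
      have hAa : A a = A c ++ [a] := hA a c k hpar
      obtain ⟨⟨hnd, hch⟩, hlast, hpref⟩ := ih
      have ha0 : a ≠ 0 := by
        intro h; rw [h, T.root_par] at hpar; simp at hpar
      have haAc : a ∉ A c := by
        intro h
        have := (hpref a h).2
        rw [hAa] at this
        have := this.length_le
        simp at this
      have h0Ac : (0 : Fin (n+1)) ∉ A c := (List.nodup_cons.mp hnd).1
      constructor
      · constructor
        · rw [hAa]
          have : ((0 :: A c) ++ [a]).Nodup := by
            rw [List.nodup_append]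
            refine ⟨hnd, List.nodup_singleton a, ?_⟩
            intro x hx y hy hxy
            simp at hy
            subst hy hxy
            rcases List.mem_cons.mp hx with h | h
            · exact ha0 h
            · exact haAc h
          simpa using this
        · rw [hAa]
          have hEac : 0 < E a c := Nat.lt_of_le_of_lt (Nat.zero_le k) (T.edge_valid a c k hpar)
          have : List.Chain' (fun x y => 0 < E y x) ((0 :: A c) ++ [a]) := by
            refine List.isChain_append.mpr ⟨hch, List.isChain_singleton a, ?_⟩
            intro x hx y hy
            simp at hy
            subst hy
            have hx' : x = c := by
              rcases hlast with ⟨hc0, hAc0⟩ | ⟨M, hM⟩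
              · rw [hAc0] at hx; simp at hx; simp [← hx, hc0]
              · rw [hM] at hx
                rw [show (0 :: (M ++ [c])) = (0 :: M) ++ [c] by simp,
                  List.getLast?_concat] at hx
                simpa [eq_comm] using hx
            rw [hx']
            exact hEac
          simpa using this
      constructor
      · exact Or.inr ⟨A c, hAa⟩
      · intro u hu
        rw [hAa] at hu
        rcases List.mem_append.mp hu with h | h
        · refine ⟨(hpref u h).1, (hpref u h).2.trans ?_⟩
          rw [hAa]; exact ⟨[a], rfl⟩
        · simp at h
          subst h
          refine ⟨by rw [hpar]; rfl, by rw [hAa]⟩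
  intro v hv
  rcases hv with h | h
  · subst h; exact main 0 Relation.ReflTransGen.refl
  · exact main v (T.reaches v h)

/-- Any partial order `prec` on the set of root-paths of `G` such that paths
whose intersection is a root-path are comparable, and proper initial segments
are smaller, induces a proper set of tree orders: for a tree `T` with path
function `A` (sending each vertex to its tree path to the root), comparing
`A i` and `A j` gives a strict total order on the vertices of `T` in which
parents are smaller, consistently under restriction to rooted subtrees. -/
theorem stmt_10 (n : ℕ) (E : Fin (n+1) → Fin (n+1) → ℕ)
    (prec : List (Fin (n+1)) → List (Fin (n+1)) → Prop)
    (hirr : ∀ L, IsRootPath E L → ¬ prec L L)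
    (htrans : ∀ L L' L'', IsRootPath E L → IsRootPath E L' → IsRootPath E L'' →
      prec L L' → prec L' L'' → prec L L'')
    (hcomp : ∀ L L', IsRootPath E L → IsRootPath E L' →
      (∃ M, IsRootPath E M ∧ ∀ v, v ∈ M ↔ (v ∈ L ∧ v ∈ L')) →
      L = L' ∨ prec L L' ∨ prec L' L)
    (hpre : ∀ L L', IsRootPath E L → L' <+: L → L' ≠ L → prec L' L)
    (T : Subtree n E) (A : Fin (n+1) → List (Fin (n+1)))
    (hA0 : A 0 = []) (hA : ∀ v q k, T.par v = some (q, k) → A v = A q ++ [v]) :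
    (∀ i ∈ T.verts, ¬ prec (A i) (A i)) ∧
    (∀ i ∈ T.verts, ∀ j ∈ T.verts, ∀ l ∈ T.verts,
        prec (A i) (A j) → prec (A j) (A l) → prec (A i) (A l)) ∧
    (∀ i ∈ T.verts, ∀ j ∈ T.verts, i ≠ j → prec (A i) (A j) ∨ prec (A j) (A i)) ∧
    (∀ j q k, T.par j = some (q, k) → prec (A q) (A j)) ∧
    (∀ t : Subtree n E, t.IsSubtreeOf T →
      ∀ A' : Fin (n+1) → List (Fin (n+1)), A' 0 = [] →
        (∀ v q k, t.par v = some (q, k) → A' v = A' q ++ [v]) →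
        ∀ i ∈ t.verts, ∀ j ∈ t.verts, (prec (A' i) (A' j) ↔ prec (A i) (A j))) := by
  have key := subtree_path_key T A hA0 hA
  have hmem : ∀ v : Fin (n+1), v ∈ T.verts ↔ (v = 0 ∨ (T.par v).isSome) := by
    intro v; simp [Subtree.verts]
  have hinj : ∀ i, (i = 0 ∨ (T.par i).isSome) → ∀ j, (j = 0 ∨ (T.par j).isSome) →
      A i = A j → i = j := by
    intro i hi j hj hAeq
    rcases (key i hi).2.1 with ⟨hi0, hAi⟩ | ⟨Mi, hMi⟩
    · rcases (key j hj).2.1 with ⟨hj0, _⟩ | ⟨Mj, hMj⟩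
      · rw [hi0, hj0]
      · rw [hAi, hMj] at hAeq; simp at hAeq
    · rcases (key j hj).2.1 with ⟨hj0, hAj⟩ | ⟨Mj, hMj⟩
      · rw [hMi, hAj] at hAeq; simp at hAeq
      · rw [hMi, hMj] at hAeq
        have := congrArg List.getLast? hAeq
        rw [List.getLast?_concat, List.getLast?_concat] at this
        simpa using this
  have hcompare : ∀ i, (i = 0 ∨ (T.par i).isSome) → ∀ j, (j = 0 ∨ (T.par j).isSome) →
      i ≠ j → prec (A i) (A j) ∨ prec (A j) (A i) := by
    intro i hi j hj hne
    obtain ⟨hrpi, hdi, hprefi⟩ := key i hi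
    obtain ⟨hrpj, hdj, hprefj⟩ := key j hj
    have hM : ∃ M, IsRootPath E M ∧ ∀ v, v ∈ M ↔ (v ∈ A i ∧ v ∈ A j) := by
      set S : Finset (Fin (n+1)) := univ.filter (fun u => u ∈ A i ∧ u ∈ A j) with hSdef
      by_cases hS : S.Nonempty
      · obtain ⟨u, huS, hmax⟩ := S.exists_max_image (fun u => (A u).length) hS
        have huS' : u ∈ A i ∧ u ∈ A j := by simpa [hSdef] using huS
        have hu : u = 0 ∨ (T.par u).isSome := Or.inr (hprefi u huS'.1).1
        refine ⟨A u, (key u hu).1, ?_⟩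
        intro w
        constructor
        · intro hw
          exact ⟨((hprefi u huS'.1).2).mem hw, ((hprefj u huS'.2).2).mem hw⟩
        · rintro ⟨hwi, hwj⟩
          have hwS : w ∈ S := by simp [hSdef, hwi, hwj]
          have hlen : (A w).length ≤ (A u).length := hmax w hwS
          have hwpref : A w <+: A u :=
            List.prefix_of_prefix_length_le (hprefi w hwi).2 (hprefi u huS'.1).2 hlen
          have hw0 : w ≠ 0 := by
            intro h; subst h
            exact (List.nodup_cons.mp hrpi.1).1 hwi
          have hww : w ∈ A w := by
            rcases (key w (Or.inr (hprefi w hwi).1)).2.1 with ⟨h, _⟩ | ⟨M, hM⟩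
            · exact absurd h hw0
            · rw [hM]; simp
          exact hwpref.mem hww
      · refine ⟨[], ⟨List.nodup_singleton 0, List.isChain_singleton 0⟩, ?_⟩
        intro w
        simp only [List.not_mem_nil, false_iff]
        rintro ⟨hwi, hwj⟩
        exact hS ⟨w, by simp [hSdef, hwi, hwj]⟩
    rcases hcomp (A i) (A j) hrpi hrpj hM with h | h
    · exact absurd (hinj i hi j hj h) hne
    · exact h
  refine ⟨?_, ?_, ?_, ?_, ?_⟩
  · intro i hi
    exact hirr _ (key i ((hmem i).mp hi)).1
  · intro i hi j hj l hl h1 h2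
    exact htrans _ _ _ (key i ((hmem i).mp hi)).1 (key j ((hmem j).mp hj)).1
      (key l ((hmem l).mp hl)).1 h1 h2
  · intro i hi j hj hne
    exact hcompare i ((hmem i).mp hi) j ((hmem j).mp hj) hne
  · intro j q k hjq
    have hj : j = 0 ∨ (T.par j).isSome := Or.inr (by rw [hjq]; rfl)
    have hAj := hA j q k hjq
    refine hpre (A j) (A q) (key j hj).1 ⟨[j], hAj.symm⟩ ?_
    intro h
    have := congrArg List.length (h.trans hAj)
    simp at this
  · intro t hsub A' hA'0 hA' i hi j hj
    have heq : ∀ v : Fin (n+1), v = 0 ∨ (t.par v).isSome → A' v = A v := by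
      have main : ∀ v : Fin (n+1),
          Relation.ReflTransGen (fun a c => ∃ k, t.par a = some (c, k)) v 0 →
          A' v = A v := by
        intro v hv
        induction hv using Relation.ReflTransGen.head_induction_on with
        | refl => rw [hA'0, hA0]
        | @head a c hac hcb ih =>
          obtain ⟨k, hpar⟩ := hac
          have hTpar : T.par a = some (c, k) := by
            rw [← hsub a (by rw [hpar]; rfl), hpar]
          rw [hA' a c k hpar, hA a c k hTpar, ih]
      intro v hv
      rcases hv with h | h
      · subst h; rw [hA'0, hA0]
      · exact main v (t.reaches v h)
    have hi' : i = 0 ∨ (t.par i).isSome := by simpa [Subtree.verts] using hi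
    have hj' : j = 0 ∨ (t.par j).isSome := by simpa [Subtree.verts] using hj
    rw [heq i hi', heq j hj']
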